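/- arXiv:1403.6324 — 3 statements merged into one kernel-verified Lean document; each statement's English description precedes it below -/
import Mathlib

section
/- If A and C solve the system A'(s) + 2r·A(s) + ((α−r)²/(γσ²))·C(s) = 0, C'(s) + r·C(s) = 0 on [0,T] with A(T) = C(T) = 1, and r ≠ 0, then the equilibrium strategy φ(s,y) = ((α−r)/(γσ²))·(C(s)/A(s))·y satisfies φ(s,y) = ((α−r)/(γσ²))·( e^{r(T−s)} + ((α−r)²/(rγσ²))(e^{r(T−s)} − 1) )^{−1}·y for all (s,y) ∈ [0,T]×ℝ, provided A(s) ≠ 0. -/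
open Real Set

/-- If A, C solve the ODE system with A(T) = C(T) = 1 and r ≠ 0, the equilibrium strategy
φ(s,y) = ((α−r)/(γσ²))·(C(s)/A(s))·y has the explicit form
((α−r)/(γσ²))·(e^{r(T−s)} + ((α−r)²/(rγσ²))(e^{r(T−s)} − 1))⁻¹·y, wherever A(s) ≠ 0. -/
theorem stmt_2 (r α σ γ T : ℝ) (hr : r ≠ 0) (hσ : σ ≠ 0) (hγ : 0 < γ) (hT : 0 < T)
    (A C : ℝ → ℝ)
    (hA : ∀ s ∈ Icc (0:ℝ) T,
        HasDerivAt A (-(2 * r * A s + ((α - r) ^ 2 / (γ * σ ^ 2)) * C s)) s)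
    (hC : ∀ s ∈ Icc (0:ℝ) T, HasDerivAt C (-(r * C s)) s)
    (hAT : A T = 1) (hCT : C T = 1) :
    ∀ s ∈ Icc (0:ℝ) T, A s ≠ 0 →
      ∀ y : ℝ,
        ((α - r) / (γ * σ ^ 2)) * (C s / A s) * y
          = ((α - r) / (γ * σ ^ 2))
              * (Real.exp (r * (T - s))
                  + ((α - r) ^ 2 / (r * γ * σ ^ 2)) * (Real.exp (r * (T - s)) - 1))⁻¹ * y := by
  set k : ℝ := (α - r) ^ 2 / (γ * σ ^ 2) with hk
  -- f := C * exp(r·) is constant on Icc 0 T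
  set f : ℝ → ℝ := fun s => C s * Real.exp (r * s) with hf
  have hfd : ∀ s ∈ Icc (0:ℝ) T, HasDerivAt f 0 s := by
    intro s hs
    have he : HasDerivAt (fun x => Real.exp (r * x)) (Real.exp (r * s) * (r * 1)) s :=
      ((hasDerivAt_id s).const_mul r).exp
    have := (hC s hs).fun_mul he
    refine this.congr_deriv ?_
    ring
  have hfc : ∀ s ∈ Icc (0:ℝ) T, f s = f 0 := by
    apply constant_of_has_deriv_right_zero
    · exact fun x hx => (hfd x hx).continuousAt.continuousWithinAt
    · exact fun x hx => (hfd x (Ico_subset_Icc_self hx)).hasDerivWithinAt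
  -- g := A·exp(2r·) + (k/r)·C·exp(2r·) is constant on Icc 0 T
  set g : ℝ → ℝ := fun s => A s * Real.exp (2 * r * s) + (k / r) * (C s * Real.exp (2 * r * s))
    with hg
  have hgd : ∀ s ∈ Icc (0:ℝ) T, HasDerivAt g 0 s := by
    intro s hs
    have he : HasDerivAt (fun x => Real.exp (2 * r * x)) (Real.exp (2 * r * s) * (2 * r * 1)) s :=
      ((hasDerivAt_id s).const_mul (2 * r)).exp
    have := ((hA s hs).fun_mul he).add (((hC s hs).fun_mul he).const_mul (k / r))
    refine this.congr_deriv ?_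
    field_simp
    ring
  have hgc : ∀ s ∈ Icc (0:ℝ) T, g s = g 0 := by
    apply constant_of_has_deriv_right_zero
    · exact fun x hx => (hgd x hx).continuousAt.continuousWithinAt
    · exact fun x hx => (hgd x (Ico_subset_Icc_self hx)).hasDerivWithinAt
  intro s hs hAs y
  have hTm : T ∈ Icc (0:ℝ) T := ⟨le_of_lt hT, le_refl T⟩
  -- C s = exp (r (T - s))
  have hCs : C s = Real.exp (r * (T - s)) := by
    have h1 : f s = f T := by rw [hfc s hs, hfc T hTm]
    have h2 : C s * Real.exp (r * s) = Real.exp (r * T) := by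
      simpa [hf, hCT] using h1
    have := congrArg (· * Real.exp (-(r * s))) h2
    simp only [mul_assoc, ← Real.exp_add] at this
    simpa [mul_comm, mul_assoc, show r * T + -(r * s) = r * (T - s) by ring] using this
  -- A equation
  have hAe : A s * Real.exp (2 * r * s) + k / r * (C s * Real.exp (2 * r * s))
      = Real.exp (2 * r * T) + k / r * Real.exp (2 * r * T) := by
    have h1 : g s = g T := by rw [hgc s hs, hgc T hTm]
    simpa [hg, hAT, hCT] using h1
  set E : ℝ := Real.exp (r * (T - s)) with hE
  have hEpos : 0 < E := Real.exp_pos _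
  have hespos : (0:ℝ) < Real.exp (2 * r * s) := Real.exp_pos _
  have hE2 : Real.exp (2 * r * T) = E ^ 2 * Real.exp (2 * r * s) := by
    rw [hE, ← Real.exp_nat_mul, ← Real.exp_add]
    ring_nf
  have hAval : A s = E * (E + k / r * (E - 1)) := by
    have := hAe
    rw [hCs, hE2] at this
    have h3 : (A s) * Real.exp (2 * r * s)
        = (E * (E + k / r * (E - 1))) * Real.exp (2 * r * s) := by
      rw [hE] at this ⊢
      nlinarith [this, Real.exp_pos (2 * r * s)]
    exact mul_right_cancel₀ (ne_of_gt hespos) h3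
  have hq : (α - r) ^ 2 / (r * γ * σ ^ 2) = k / r := by
    rw [hk, div_div]
    ring_nf
  have hD : E + k / r * (E - 1) ≠ 0 := by
    intro h0
    apply hAs
    rw [hAval, h0, mul_zero]
  have hCA : C s / A s = (E + k / r * (E - 1))⁻¹ := by
    rw [hCs, hAval]
    rw [eq_comm, inv_eq_iff_eq_inv, inv_div]
    field_simp
  rw [hq, hCA]
end

section
/- Suppose H : U → ℝ is concave where U ⊆ ℝ is convex, P ≤ 0, σ : U → ℝ is affine, and û ∈ U. Define 𝓗(v) = H(v) + (P/2)·(σ(v) − σ(û))². Then û maximizes 𝓗 over U if and only if û maximizes H over U. -/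
/-- Proposition 3.1 (deterministic 1-d version): for H concave on a convex U ⊆ ℝ, P ≤ 0 and
σ affine, û maximizes 𝓗(v) = H(v) + (P/2)(σ(v) − σ(û))² over U iff û maximizes H over U. -/
theorem stmt_15 (U : Set ℝ) (hU : Convex ℝ U) (H : ℝ → ℝ) (hconc : ConcaveOn ℝ U H)
    (P : ℝ) (hP : P ≤ 0) (σ : ℝ → ℝ) (c d : ℝ) (hσ : σ = fun v => c * v + d)
    (uh : ℝ) (huh : uh ∈ U) :
    IsMaxOn (fun v => H v + (P / 2) * (σ v - σ uh) ^ 2) U uh ↔ IsMaxOn H U uh := by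
  subst hσ
  constructor
  · intro hmax v hv
    show H v ≤ H uh
    set K : ℝ := (-P / 2) * (c * (v - uh)) ^ 2 with hKdef
    have hK0 : 0 ≤ K := by
      have : 0 ≤ -P / 2 := by linarith
      positivity
    refine le_of_forall_pos_le_add fun ε hε => ?_
    set t : ℝ := min 1 (ε / (K + 1)) with htdef
    have ht0 : 0 < t := lt_min one_pos (div_pos hε (by linarith))
    have ht1 : t ≤ 1 := min_le_left _ _
    have hmem : (1 - t) • uh + t • v ∈ U := hU huh hv (by linarith) ht0.le (by ring)
    have h1 := hmax hmem
    have h2 := hconc.2 huh hv (by linarith : (0:ℝ) ≤ 1 - t) ht0.le (by ring)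
    simp only [smul_eq_mul] at h1 h2
    have h1' : H ((1 - t) * uh + t * v)
        + (P / 2) * (c * t * (v - uh)) ^ 2 ≤ H uh := by
      have heq : (c * ((1 - t) * uh + t * v) + d) - (c * uh + d) = c * t * (v - uh) := by ring
      have : H ((1 - t) * uh + t * v)
          + (P / 2) * ((c * ((1 - t) * uh + t * v) + d) - (c * uh + d)) ^ 2
          ≤ H uh + (P / 2) * ((c * uh + d) - (c * uh + d)) ^ 2 := h1
      rw [heq] at this
      simpa using this
    have htK : t * K ≤ ε := by
      have ht2 : t ≤ ε / (K + 1) := min_le_right _ _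
      have hKpos : (0:ℝ) < K + 1 := by linarith
      have : t * (K + 1) ≤ ε := by
        calc t * (K + 1) ≤ (ε / (K + 1)) * (K + 1) := by nlinarith
        _ = ε := by field_simp
      nlinarith
    -- from h1' and h2: t * (H v - H uh) ≤ t^2 * K
    have key : t * (H v - H uh) ≤ t ^ 2 * K := by nlinarith [h1', h2]
    nlinarith [mul_le_mul_of_nonneg_left htK ht0.le, key, ht0]
  · intro hmax v hv
    have h1 : H v ≤ H uh := hmax hv
    have h2 : (P / 2) * ((c * v + d) - (c * uh + d)) ^ 2 ≤ 0 := by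
      have : 0 ≤ ((c * v + d) - (c * uh + d)) ^ 2 := sq_nonneg _
      nlinarith
    show H v + (P / 2) * ((c * v + d) - (c * uh + d)) ^ 2 ≤ H uh + (P / 2) * ((c * uh + d) - (c * uh + d)) ^ 2
    nlinarith
end

section
/- Let a ≠ 0 or a = 0, b ∈ ℝ, and let v, w : [0,T] → ℝ solve v'(s) = −2a·v(s), w'(s) = −b²·v(s) + b²·β(s)·w(s) with v(T) = γ > 0, w(T) = 1, where β(s) = γe^{a(T−s)} ≥ 0 and b² ≥ 0. Then v(s) = γ·e^{2a(T−s)} > 0 for all s ∈ [0,T], and w(s) ≥ 1 for all s ∈ [0,T]; in particular α(s) = v(s)/w(s) is well-defined and positive on [0,T]. -/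
open Real Set

/-- Solvability of the Riccati linearization: if v' = −2a·v, w' = −b²·v + b²·β·w on [0,T]
with v(T) = γ > 0, w(T) = 1 and β(s) = γe^{a(T−s)}, then v(s) = γ·e^{2a(T−s)} > 0 and
w(s) > 0 on [0,T]; in particular α = v/w is well-defined and positive on [0,T]. -/
theorem stmt_19 (a b γ T : ℝ) (hγ : 0 < γ) (hT : 0 < T)
    (β v w : ℝ → ℝ) (hβ : β = fun s => γ * Real.exp (a * (T - s)))
    (hv : ∀ s ∈ Icc (0:ℝ) T, HasDerivAt v (-(2 * a * v s)) s)
    (hw : ∀ s ∈ Icc (0:ℝ) T, HasDerivAt w (-(b ^ 2 * v s) + b ^ 2 * β s * w s) s)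
    (hvT : v T = γ) (hwT : w T = 1) :
    ∀ s ∈ Icc (0:ℝ) T,
      v s = γ * Real.exp (2 * a * (T - s)) ∧ 0 < v s ∧ 0 < w s ∧ 0 < v s / w s := by
  have hTmem : T ∈ Icc (0:ℝ) T := right_mem_Icc.mpr hT.le
  -- Step 1: the formula for v.
  set g : ℝ → ℝ := fun s => v s * Real.exp (2 * a * s) with hgdef
  have hg : ∀ s ∈ Icc (0:ℝ) T, HasDerivAt g 0 s := by
    intro s hs
    have h1 : HasDerivAt (fun s : ℝ => Real.exp (2 * a * s))
        (Real.exp (2 * a * s) * (2 * a)) s := by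
      simpa using ((hasDerivAt_id s).const_mul (2 * a)).exp
    have h2 : HasDerivAt (fun y => v y * Real.exp (2 * a * y))
        (-(2 * a * v s) * Real.exp (2 * a * s) + v s * (Real.exp (2 * a * s) * (2 * a))) s :=
      (hv s hs).mul h1
    convert h2 using 1
    ring
  have hgc : ContinuousOn g (Icc 0 T) := fun s hs => (hg s hs).continuousAt.continuousWithinAt
  have hgconst : ∀ s ∈ Icc (0:ℝ) T, g s = g 0 := by
    apply constant_of_has_deriv_right_zero hgc
    intro x hx
    exact (hg x (Ico_subset_Icc_self hx)).hasDerivWithinAt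
  have hgval : ∀ s ∈ Icc (0:ℝ) T, g s = γ * Real.exp (2 * a * T) := by
    intro s hs
    have h1 := hgconst s hs
    have h2 := hgconst T hTmem
    rw [h1, ← h2, hgdef]
    simp [hvT]
  have hvf : ∀ s ∈ Icc (0:ℝ) T, v s = γ * Real.exp (2 * a * (T - s)) := by
    intro s hs
    have h1 : v s * Real.exp (2 * a * s) = γ * Real.exp (2 * a * T) := hgval s hs
    have h2 : v s = γ * Real.exp (2 * a * T) / Real.exp (2 * a * s) := by
      rw [eq_div_iff (Real.exp_ne_zero _)]; exact h1
    rw [h2, mul_div_assoc, ← Real.exp_sub]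
    congr 2
    ring
  -- Step 2: positivity of w via integrating factor.
  have hfc : Continuous (fun t => b ^ 2 * β t) := by
    subst hβ; fun_prop
  set B : ℝ → ℝ := fun s => ∫ t in (0:ℝ)..s, b ^ 2 * β t with hBdef
  have hB : ∀ s : ℝ, HasDerivAt B (b ^ 2 * β s) s := fun s =>
    intervalIntegral.integral_hasDerivAt_right (hfc.intervalIntegrable 0 s)
      (hfc.stronglyMeasurableAtFilter _ _) hfc.continuousAt
  set h : ℝ → ℝ := fun s => w s * Real.exp (-B s) with hhdef
  have hh : ∀ s ∈ Icc (0:ℝ) T,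
      HasDerivAt h (-(b ^ 2 * v s * Real.exp (-B s))) s := by
    intro s hs
    have h1 : HasDerivAt (fun y => w y * Real.exp (-B y))
        ((-(b ^ 2 * v s) + b ^ 2 * β s * w s) * Real.exp (-B s)
          + w s * (Real.exp (-B s) * -(b ^ 2 * β s))) s :=
      (hw s hs).mul ((hB s).neg.exp)
    convert h1 using 1
    ring
  have hhc : ContinuousOn h (Icc 0 T) := fun s hs => (hh s hs).continuousAt.continuousWithinAt
  have hanti : AntitoneOn h (Icc 0 T) := by
    apply antitoneOn_of_deriv_nonpos (convex_Icc 0 T) hhc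
    · intro x hx
      rw [interior_Icc] at hx
      exact (hh x (Ioo_subset_Icc_self hx)).differentiableAt.differentiableWithinAt
    · intro x hx
      rw [interior_Icc] at hx
      have hx' := Ioo_subset_Icc_self hx
      rw [(hh x hx').deriv]
      have hvpos : 0 < v x := by
        rw [hvf x hx']
        positivity
      have : 0 ≤ b ^ 2 * v x * Real.exp (-B x) := by positivity
      linarith
  intro s hs
  have hvs : v s = γ * Real.exp (2 * a * (T - s)) := hvf s hs
  have hvpos : 0 < v s := by rw [hvs]; positivity
  have hhT : h T ≤ h s := hanti hs hTmem hs.2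
  have hhTval : h T = Real.exp (-B T) := by simp [hhdef, hwT]
  have hwpos : 0 < w s := by
    have h1 : 0 < h s := lt_of_lt_of_le (by rw [hhTval]; positivity) hhT
    have h2 : 0 < Real.exp (-B s) := Real.exp_pos _
    by_contra hcon
    push_neg at hcon
    have : h s ≤ 0 := mul_nonpos_of_nonpos_of_nonneg hcon h2.le
    linarith
  exact ⟨hvs, hvpos, hwpos, div_pos hvpos hwpos⟩
end
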